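/- Let n and k be positive integers and let C be an ℝ-linear subspace of the space of n×n real matrices of dimension k in which every nonzero matrix is invertible. Then the set of 2n×2n block matrices M(A,λ) = [[λ·I_n, Aᵀ],[A, −λ·I_n]], ranging over A ∈ C and λ ∈ ℝ, is an ℝ-linear subspace of the space of 2n×2n real matrices of dimension k + 1, every element of which is a symmetric matrix and every nonzero element of which is invertible. -/

import Mathlib

open Matrix

/-- from a `k`-dimensional space `C` of `n×n` real matrices in which
every nonzero element is invertible, the set of block matrices
`M(A,λ) = [[λI, Aᵀ],[A, -λI]]` with `A ∈ C`, `λ ∈ ℝ`, is a `(k+1)`-dimensional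
subspace of `2n×2n` real matrices consisting of symmetric matrices, in which
every nonzero element is invertible. -/

noncomputable def phi (n : ℕ) (C : Submodule ℝ (Matrix (Fin n) (Fin n) ℝ)) :
    C × ℝ →ₗ[ℝ] Matrix (Fin n ⊕ Fin n) (Fin n ⊕ Fin n) ℝ where
  toFun p := Matrix.fromBlocks (p.2 • (1 : Matrix (Fin n) (Fin n) ℝ)) (p.1 : Matrix (Fin n) (Fin n) ℝ)ᵀ
      (p.1 : Matrix (Fin n) (Fin n) ℝ) (-(p.2 • (1 : Matrix (Fin n) (Fin n) ℝ)))
  map_add' p q := by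
    simp only [Prod.snd_add, Prod.fst_add, Submodule.coe_add, transpose_add,
      Matrix.fromBlocks_add, add_smul, neg_add]
  map_smul' c p := by
    simp only [Prod.smul_snd, Prod.smul_fst, SetLike.val_smul, transpose_smul, RingHom.id_apply,
      Matrix.fromBlocks_smul, smul_smul, smul_neg, smul_eq_mul]

lemma phi_inj (n : ℕ) (hn : 0 < n) (C : Submodule ℝ (Matrix (Fin n) (Fin n) ℝ)) :
    Function.Injective (phi n C) := by
  have : Nonempty (Fin n) := ⟨⟨0, hn⟩⟩
  rw [← LinearMap.ker_eq_bot]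
  ext ⟨A, l⟩
  simp only [LinearMap.mem_ker, Submodule.mem_bot, phi, LinearMap.coe_mk, AddHom.coe_mk]
  constructor
  · intro h
    have hA : (A : Matrix (Fin n) (Fin n) ℝ) = 0 := by
      have := congrArg (Matrix.toBlocks₂₁) h
      change Matrix.toBlocks₂₁ (Matrix.fromBlocks _ _ _ _) = _ at this
      rw [Matrix.toBlocks_fromBlocks₂₁] at this
      ext i j
      have := congrFun (congrFun this i) j
      simpa [Matrix.toBlocks₂₁] using this
    have hl : l = 0 := by
      have := congrArg (fun M => M (Sum.inl ⟨0, hn⟩) (Sum.inl ⟨0, hn⟩)) h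
      simpa [Matrix.fromBlocks, Matrix.one_apply] using this
    have : A = 0 := Subtype.ext hA
    simp [this, hl, Prod.ext_iff]
  · intro h
    rw [Prod.ext_iff] at h
    obtain ⟨h1, h2⟩ := h
    simp only [Prod.fst_zero, Prod.snd_zero] at h1 h2
    subst h2
    show Matrix.fromBlocks _ _ _ _ = 0
    simp [h1]

lemma posdef_aux {n : ℕ} (l : ℝ) (hl : l ≠ 0) (B : Matrix (Fin n) (Fin n) ℝ)
    (hB : B.PosSemidef) : ((l * l) • (1 : Matrix (Fin n) (Fin n) ℝ) + B).PosDef := by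
  refine Matrix.PosDef.add_posSemidef ?_ hB
  rw [Matrix.smul_one_eq_diagonal]
  exact Matrix.posDef_diagonal_iff.mpr fun i => mul_self_pos.mpr hl

lemma unit_aux {n : ℕ} (A : Matrix (Fin n) (Fin n) ℝ) (l : ℝ)
    (hA : A ≠ 0 → IsUnit A) (hne : ¬(A = 0 ∧ l = 0)) :
    IsUnit (Matrix.fromBlocks (l • (1 : Matrix (Fin n) (Fin n) ℝ)) Aᵀ
        A (-(l • (1 : Matrix (Fin n) (Fin n) ℝ)))) := by
  set M := Matrix.fromBlocks (l • (1 : Matrix (Fin n) (Fin n) ℝ)) Aᵀ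
        A (-(l • (1 : Matrix (Fin n) (Fin n) ℝ))) with hM
  have hMM : M * M = Matrix.fromBlocks ((l * l) • 1 + Aᵀ * A) 0 0 ((l * l) • 1 + A * Aᵀ) := by
    rw [hM, Matrix.fromBlocks_multiply]
    simp [Matrix.smul_mul, Matrix.mul_smul, smul_smul, add_comm]
  have hpst : (Aᵀ * A).PosSemidef := by
    have := Matrix.posSemidef_conjTranspose_mul_self A
    rwa [Matrix.conjTranspose_eq_transpose_of_trivial] at this
  have hps : (A * Aᵀ).PosSemidef := by
    have := Matrix.posSemidef_self_mul_conjTranspose A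
    rwa [Matrix.conjTranspose_eq_transpose_of_trivial] at this
  have h1 : ((l * l) • (1 : Matrix (Fin n) (Fin n) ℝ) + Aᵀ * A).det ≠ 0 := by
    rcases eq_or_ne l 0 with rfl | hl
    · have hA' : IsUnit A := hA (fun h => hne ⟨h, rfl⟩)
      simp only [zero_mul, zero_smul, zero_add, Matrix.det_mul, Matrix.det_transpose]
      have := (Matrix.isUnit_iff_isUnit_det A).mp hA'
      exact mul_ne_zero (this.ne_zero) (this.ne_zero)
    · exact (posdef_aux l hl _ hpst).det_pos.ne'
  have h2 : ((l * l) • (1 : Matrix (Fin n) (Fin n) ℝ) + A * Aᵀ).det ≠ 0 := by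
    rcases eq_or_ne l 0 with rfl | hl
    · have hA' : IsUnit A := hA (fun h => hne ⟨h, rfl⟩)
      simp only [zero_mul, zero_smul, zero_add, Matrix.det_mul, Matrix.det_transpose]
      have := (Matrix.isUnit_iff_isUnit_det A).mp hA'
      exact mul_ne_zero (this.ne_zero) (this.ne_zero)
    · exact (posdef_aux l hl _ hps).det_pos.ne'
  rw [Matrix.isUnit_iff_isUnit_det, isUnit_iff_ne_zero]
  intro h
  have : (M * M).det = 0 := by rw [Matrix.det_mul, h, mul_zero]
  rw [hMM, Matrix.det_fromBlocks_zero₂₁] at this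
  exact (mul_ne_zero h1 h2) this

theorem symmetric_block_construction (n k : ℕ) (hn : 0 < n) (hk : 0 < k)
    (C : Submodule ℝ (Matrix (Fin n) (Fin n) ℝ))
    (hdim : Module.finrank ℝ C = k)
    (hC : ∀ A ∈ C, A ≠ 0 → IsUnit A) :
    ∃ D : Submodule ℝ (Matrix (Fin n ⊕ Fin n) (Fin n ⊕ Fin n) ℝ),
      (D : Set (Matrix (Fin n ⊕ Fin n) (Fin n ⊕ Fin n) ℝ)) =
        {M | ∃ A ∈ C, ∃ l : ℝ,
          M = Matrix.fromBlocks (l • (1 : Matrix (Fin n) (Fin n) ℝ)) Aᵀ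
                A (-(l • (1 : Matrix (Fin n) (Fin n) ℝ)))} ∧
      Module.finrank ℝ D = k + 1 ∧
      (∀ M ∈ D, M.IsSymm) ∧
      (∀ M ∈ D, M ≠ 0 → IsUnit M) := by
  refine ⟨LinearMap.range (phi n C), ?_, ?_, ?_, ?_⟩
  · ext M
    simp only [SetLike.mem_coe, LinearMap.mem_range, Set.mem_setOf_eq]
    constructor
    · rintro ⟨⟨A, l⟩, rfl⟩
      exact ⟨A, A.2, l, rfl⟩
    · rintro ⟨A, hA, l, rfl⟩
      exact ⟨(⟨A, hA⟩, l), rfl⟩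
  · rw [LinearMap.finrank_range_of_inj (phi_inj n hn C), Module.finrank_prod, hdim,
      Module.finrank_self]
  · rintro M ⟨⟨A, l⟩, rfl⟩
    show (phi n C _)ᵀ = _
    show (Matrix.fromBlocks _ _ _ _)ᵀ = Matrix.fromBlocks _ _ _ _
    simp only [phi, LinearMap.coe_mk, AddHom.coe_mk, Matrix.fromBlocks_transpose,
      Matrix.transpose_smul, Matrix.transpose_one, Matrix.transpose_neg,
      Matrix.transpose_transpose]
  · rintro M ⟨⟨⟨A, hA⟩, l⟩, rfl⟩ hne
    refine unit_aux A l (hC A hA) ?_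
    rintro ⟨h0, rfl⟩
    apply hne
    show Matrix.fromBlocks _ _ _ _ = 0
    simp [h0]
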